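/- Let B ⊆ F_q^d be a Salem set with constant C, i.e., |B̂(m)| ≤ C·√|B|/q^d for all nonzero m ∈ F_q^d. Then for any nonempty A ⊆ F_q^d with |A||B| ≥ q^d, we have |A - B| ≥ (1/(2C²))·q^d (assuming C ≥ 1). -/

import Mathlib

open Finset Complex
open scoped Pointwise ComplexConjugate

set_option linter.unusedSectionVars false

section aux
variable {F : Type*} [Field F] [Fintype F] [DecidableEq F] {d : ℕ}

lemma chi_map_sum (χ : AddChar F ℂ) {ι : Type*} (s : Finset ι) (g : ι → F) :
    χ (∑ i ∈ s, g i) = ∏ i ∈ s, χ (g i) := by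
  induction s using Finset.cons_induction with
  | empty => simp
  | cons a s ha ih => simp [Finset.sum_cons, Finset.prod_cons, AddChar.map_add_eq_mul, ih]

lemma chi_sum_F (χ : AddChar F ℂ) (hχ : χ ≠ 1) (w : F) :
    ∑ t : F, χ (w * t) = if w = 0 then (Fintype.card F : ℂ) else 0 := by
  split_ifs with h
  · simp [h, Finset.card_univ]
  · have h1 : AddChar.mulShift χ w ≠ 0 := by
      rw [← AddChar.one_eq_zero]
      exact fun hcon => hχ ((AddChar.mulShift_unit_eq_one_iff χ (Ne.isUnit h)).mp hcon)
    simpa [AddChar.mulShift_apply] using AddChar.sum_eq_zero_iff_ne_zero.mpr h1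

lemma orth (χ : AddChar F ℂ) (hχ : χ ≠ 1) (v : Fin d → F) :
    ∑ m : Fin d → F, χ (∑ i, v i * m i)
      = if v = 0 then ((Fintype.card F : ℂ)) ^ d else 0 := by
  have h1 : ∑ m : Fin d → F, χ (∑ i, v i * m i)
      = ∏ i : Fin d, ∑ t : F, χ (v i * t) := by
    rw [Finset.prod_univ_sum]
    rw [← Fintype.piFinset_univ]
    exact Finset.sum_congr rfl fun m _ => chi_map_sum χ _ _
  rw [h1]
  simp_rw [chi_sum_F χ hχ]
  split_ifs with h
  · simp [h, Finset.prod_const, Finset.card_univ]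
  · obtain ⟨i, hi⟩ : ∃ i, v i ≠ 0 := by
      by_contra hc; push_neg at hc; exact h (funext hc)
    exact Finset.prod_eq_zero (Finset.mem_univ i) (by simp [hi])

lemma conj_S (χ : AddChar F ℂ) (E : Finset (Fin d → F)) (m : Fin d → F) :
    (∑ x ∈ E, χ (-(∑ i, x i * m i))) = conj (∑ x ∈ E, χ (∑ i, x i * m i)) := by
  rw [map_sum]
  exact Finset.sum_congr rfl fun x _ => AddChar.map_neg_eq_conj χ _

lemma parseval (χ : AddChar F ℂ) (hχ : χ ≠ 1) (E : Finset (Fin d → F)) :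
    ∑ m : Fin d → F, (‖∑ x ∈ E, χ (∑ i, x i * m i)‖)^2
      = (Fintype.card F : ℝ)^d * E.card := by
  have key : ∑ m : Fin d → F,
      ((∑ x ∈ E, χ (∑ i, x i * m i)) * conj (∑ x ∈ E, χ (∑ i, x i * m i)))
      = ((Fintype.card F : ℂ))^d * E.card := by
    calc ∑ m : Fin d → F,
        ((∑ x ∈ E, χ (∑ i, x i * m i)) * conj (∑ x ∈ E, χ (∑ i, x i * m i)))
        = ∑ m : Fin d → F, ∑ x ∈ E, ∑ y ∈ E, χ (∑ i, (x - y) i * m i) := by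
          refine Finset.sum_congr rfl fun m _ => ?_
          rw [← conj_S χ E m, Finset.sum_mul_sum]
          refine Finset.sum_congr rfl fun x _ => Finset.sum_congr rfl fun y _ => ?_
          rw [← AddChar.map_add_eq_mul]
          congr 1
          simp only [Pi.sub_apply, sub_mul, Finset.sum_sub_distrib]
          ring
      _ = ∑ x ∈ E, ∑ y ∈ E, ∑ m : Fin d → F, χ (∑ i, (x - y) i * m i) := by
          rw [Finset.sum_comm]
          exact Finset.sum_congr rfl fun x _ => Finset.sum_comm
      _ = ∑ x ∈ E, ∑ y ∈ E, if x = y then ((Fintype.card F : ℂ))^d else 0 := by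
          refine Finset.sum_congr rfl fun x _ => Finset.sum_congr rfl fun y _ => ?_
          rw [orth χ hχ]
          simp only [sub_eq_zero]
      _ = ∑ x ∈ E, ((Fintype.card F : ℂ))^d := by
          refine Finset.sum_congr rfl fun x hx => ?_
          rw [Finset.sum_ite_eq]
          simp [hx]
      _ = ((Fintype.card F : ℂ))^d * E.card := by
          rw [Finset.sum_const, nsmul_eq_mul, mul_comm]
  have hterm : ∀ z : ℂ, ((‖z‖ : ℂ))^2 = z * conj z := by
    intro z; rw [← Complex.ofReal_pow, Complex.sq_norm, Complex.mul_conj]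
  apply Complex.ofReal_injective
  push_cast
  simp_rw [hterm]
  exact key

lemma sum_prod_mul {α β : Type*} (s : Finset α) (t : Finset β) (g : α → ℂ) (h : β → ℂ) :
    ∑ p ∈ s ×ˢ t, g p.1 * h p.2 = (∑ a ∈ s, g a) * (∑ b ∈ t, h b) := by
  rw [Finset.sum_mul_sum, Finset.sum_product]

lemma energy (χ : AddChar F ℂ) (hχ : χ ≠ 1) (A B : Finset (Fin d → F)) :
    (∑ z : Fin d → F,
        ((((A ×ˢ B).filter (fun p => p.1 - p.2 = z)).card : ℝ))^2) * (Fintype.card F : ℝ)^d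
      = ∑ m : Fin d → F,
          (‖∑ x ∈ A, χ (∑ i, x i * m i)‖)^2
            * (‖∑ x ∈ B, χ (∑ i, x i * m i)‖)^2 := by
  have key : (∑ z : Fin d → F,
        ((((A ×ˢ B).filter (fun p => p.1 - p.2 = z)).card : ℂ))^2) * ((Fintype.card F : ℂ))^d
      = ∑ m : Fin d → F,
          ((∑ x ∈ A, χ (∑ i, x i * m i)) * conj (∑ x ∈ A, χ (∑ i, x i * m i)))
            * ((∑ x ∈ B, χ (∑ i, x i * m i)) * conj (∑ x ∈ B, χ (∑ i, x i * m i))) := by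
    have hb : ∀ z : Fin d → F, ((((A ×ˢ B).filter (fun p => p.1 - p.2 = z)).card : ℂ))
        = ∑ p ∈ A ×ˢ B, if p.1 - p.2 = z then (1:ℂ) else 0 := by
      intro z; rw [Finset.sum_boole]
    have step1 : (∑ z : Fin d → F,
        ((((A ×ˢ B).filter (fun p => p.1 - p.2 = z)).card : ℂ))^2)
        = ∑ p ∈ A ×ˢ B, ∑ p' ∈ A ×ˢ B, if p.1 - p.2 = p'.1 - p'.2 then (1:ℂ) else 0 := by
      simp_rw [hb, sq, Finset.sum_mul_sum]
      rw [Finset.sum_comm]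
      refine Finset.sum_congr rfl fun p _ => ?_
      rw [Finset.sum_comm]
      refine Finset.sum_congr rfl fun p' _ => ?_
      simp_rw [ite_mul, one_mul, zero_mul]
      rw [Finset.sum_ite_eq]
      simp [eq_comm]
    calc (∑ z : Fin d → F,
        ((((A ×ˢ B).filter (fun p => p.1 - p.2 = z)).card : ℂ))^2) * ((Fintype.card F : ℂ))^d
        = ∑ p ∈ A ×ˢ B, ∑ p' ∈ A ×ˢ B,
            (if p.1 - p.2 = p'.1 - p'.2 then (1:ℂ) else 0) * ((Fintype.card F : ℂ))^d := by
          rw [step1, Finset.sum_mul]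
          exact Finset.sum_congr rfl fun p _ => by rw [Finset.sum_mul]
      _ = ∑ p ∈ A ×ˢ B, ∑ p' ∈ A ×ˢ B, ∑ m : Fin d → F,
            χ (∑ i, (p.1 - p.2 - (p'.1 - p'.2)) i * m i) := by
          refine Finset.sum_congr rfl fun p _ => Finset.sum_congr rfl fun p' _ => ?_
          rw [orth χ hχ]
          simp only [sub_eq_zero]
          split_ifs with h <;> simp
      _ = ∑ m : Fin d → F, ∑ p ∈ A ×ˢ B, ∑ p' ∈ A ×ˢ B,
            χ (∑ i, (p.1 - p.2 - (p'.1 - p'.2)) i * m i) := by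
          exact (Finset.sum_congr rfl fun p _ => Finset.sum_comm).trans Finset.sum_comm
      _ = ∑ m : Fin d → F, ∑ p ∈ A ×ˢ B, ∑ p' ∈ A ×ˢ B,
            (χ (∑ i, p.1 i * m i) * χ (-(∑ i, p.2 i * m i)))
              * (χ (-(∑ i, p'.1 i * m i)) * χ (∑ i, p'.2 i * m i)) := by
          refine Finset.sum_congr rfl fun m _ => Finset.sum_congr rfl fun p _ =>
            Finset.sum_congr rfl fun p' _ => ?_
          rw [← AddChar.map_add_eq_mul, ← AddChar.map_add_eq_mul, ← AddChar.map_add_eq_mul]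
          congr 1
          simp only [Pi.sub_apply, sub_mul, Finset.sum_sub_distrib]
          ring
      _ = ∑ m : Fin d → F,
            ((∑ x ∈ A, χ (∑ i, x i * m i)) * (∑ x ∈ B, χ (-(∑ i, x i * m i))))
              * ((∑ x ∈ A, χ (-(∑ i, x i * m i))) * (∑ x ∈ B, χ (∑ i, x i * m i))) := by
          refine Finset.sum_congr rfl fun m _ => ?_
          rw [← sum_prod_mul A B (fun x => χ (∑ i, x i * m i))
                (fun x => χ (-(∑ i, x i * m i))),
              ← sum_prod_mul A B (fun x => χ (-(∑ i, x i * m i)))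
                (fun x => χ (∑ i, x i * m i)),
              Finset.sum_mul_sum]
      _ = ∑ m : Fin d → F,
          ((∑ x ∈ A, χ (∑ i, x i * m i)) * conj (∑ x ∈ A, χ (∑ i, x i * m i)))
            * ((∑ x ∈ B, χ (∑ i, x i * m i)) * conj (∑ x ∈ B, χ (∑ i, x i * m i))) := by
          refine Finset.sum_congr rfl fun m _ => ?_
          rw [conj_S, conj_S]
          ring
  have hterm : ∀ z : ℂ, ((‖z‖ : ℂ))^2 = z * conj z := by
    intro z; rw [← Complex.ofReal_pow, Complex.sq_norm, Complex.mul_conj]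
  apply Complex.ofReal_injective
  push_cast
  simp_rw [hterm]
  exact_mod_cast key

end aux

/-- The normalized finite-field Fourier transform of the indicator of `E`. -/
noncomputable def ftE {F : Type*} [Field F] [Fintype F] {d : ℕ} (χ : AddChar F ℂ)
    (E : Finset (Fin d → F)) (m : Fin d → F) : ℂ :=
  (∑ x ∈ E, χ (-(∑ i, x i * m i))) / (Fintype.card F : ℂ) ^ d

theorem stmt_13 {F : Type*} [Field F] [Fintype F] [DecidableEq F] {d : ℕ} (hd : 1 ≤ d)
    (χ : AddChar F ℂ) (hχ : χ ≠ 1) (A B : Finset (Fin d → F)) (hA : A.Nonempty)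
    (C : ℝ) (hC : 1 ≤ C)
    (hSalem : ∀ m : Fin d → F, m ≠ 0 →
      ‖ftE χ B m‖ ≤ C * Real.sqrt B.card / (Fintype.card F : ℝ) ^ d)
    (hAB : ((Fintype.card F : ℝ)) ^ d ≤ (A.card : ℝ) * B.card) :
    (1 / (2 * C ^ 2)) * (Fintype.card F : ℝ) ^ d ≤ ((A - B).card : ℝ) := by
  classical
  have hq0 : (0:ℝ) < (Fintype.card F : ℝ) := by exact_mod_cast Fintype.card_pos
  have hN0 : (0:ℝ) < (Fintype.card F : ℝ) ^ d := pow_pos hq0 d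
  have hB : B.Nonempty := by
    rcases B.eq_empty_or_nonempty with h | h
    · exfalso; rw [h] at hAB; simp at hAB; linarith
    · exact h
  have ha0 : (0:ℝ) < A.card := by exact_mod_cast Finset.card_pos.mpr hA
  have hb0 : (0:ℝ) < B.card := by exact_mod_cast Finset.card_pos.mpr hB
  have hC0 : (0:ℝ) < C := lt_of_lt_of_le one_pos hC
  -- the counting function sums to |A||B|
  have hsum : ∑ z ∈ A - B, ((((A ×ˢ B).filter (fun p => p.1 - p.2 = z)).card : ℝ))
      = (A.card : ℝ) * B.card := by
    have h1 : (A ×ˢ B).card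
        = ∑ z ∈ A - B, ((A ×ˢ B).filter (fun p => p.1 - p.2 = z)).card :=
      Finset.card_eq_sum_card_fiberwise (fun p hp => by
        rw [Finset.mem_coe, Finset.mem_product] at hp
        exact Finset.mem_coe.mpr (Finset.sub_mem_sub hp.1 hp.2))
    calc ∑ z ∈ A - B, ((((A ×ˢ B).filter (fun p => p.1 - p.2 = z)).card : ℝ))
        = ((A ×ˢ B).card : ℝ) := by exact_mod_cast h1.symm
      _ = (A.card : ℝ) * B.card := by rw [Finset.card_product]; push_cast; ring
  -- Cauchy-Schwarz
  have hCS : ((A.card:ℝ) * B.card)^2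
      ≤ ((A-B).card : ℝ)
        * ∑ z ∈ A - B, ((((A ×ˢ B).filter (fun p => p.1 - p.2 = z)).card : ℝ))^2 := by
    rw [← hsum]
    exact sq_sum_le_card_mul_sum_sq
  have hmono : ∑ z ∈ A - B, ((((A ×ˢ B).filter (fun p => p.1 - p.2 = z)).card : ℝ))^2
      ≤ ∑ z : Fin d → F, ((((A ×ˢ B).filter (fun p => p.1 - p.2 = z)).card : ℝ))^2 :=
    Finset.sum_le_sum_of_subset_of_nonneg (Finset.subset_univ _) (fun _ _ _ => sq_nonneg _)
  -- pointwise Salem bound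
  have hptB : ∀ m : Fin d → F, m ≠ 0 →
      (‖∑ x ∈ B, χ (∑ i, x i * m i)‖)^2 ≤ C^2 * B.card := by
    intro m hm
    have h1 := hSalem m hm
    have habs : ‖∑ x ∈ B, χ (∑ i, x i * m i)‖
        = ‖∑ x ∈ B, χ (-(∑ i, x i * m i))‖ := by
      rw [conj_S χ B m, Complex.norm_conj]
    have hft : ‖ftE χ B m‖
        = ‖∑ x ∈ B, χ (-(∑ i, x i * m i))‖ / (Fintype.card F:ℝ)^d := by
      rw [ftE, norm_div, norm_pow, Complex.norm_natCast]
    rw [hft] at h1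
    have h2 : ‖∑ x ∈ B, χ (∑ i, x i * m i)‖ ≤ C * Real.sqrt B.card := by
      rw [habs]
      have := (div_le_div_iff₀ hN0 hN0).mp h1
      exact le_of_mul_le_mul_right this hN0
    calc (‖∑ x ∈ B, χ (∑ i, x i * m i)‖)^2
        ≤ (C * Real.sqrt B.card)^2 := pow_le_pow_left₀ (norm_nonneg _) h2 2
      _ = C^2 * B.card := by
          rw [mul_pow, Real.sq_sqrt hb0.le]
  -- bound the Fourier side
  have hRHS : ∑ m : Fin d → F,
        (‖∑ x ∈ A, χ (∑ i, x i * m i)‖)^2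
          * (‖∑ x ∈ B, χ (∑ i, x i * m i)‖)^2
      ≤ ((A.card:ℝ) * B.card)^2
          + C^2 * B.card * ((Fintype.card F : ℝ)^d * A.card) := by
    have hzero_mem : (0 : Fin d → F) ∈ (Finset.univ : Finset (Fin d → F)) := Finset.mem_univ _
    rw [← Finset.add_sum_erase _ _ hzero_mem]
    have hA0 : (∑ x ∈ A, χ (∑ i, x i * (0 : Fin d → F) i)) = (A.card : ℂ) := by simp
    have hB0 : (∑ x ∈ B, χ (∑ i, x i * (0 : Fin d → F) i)) = (B.card : ℂ) := by simp
    have t0 : (‖∑ x ∈ A, χ (∑ i, x i * (0 : Fin d → F) i)‖)^2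
        * (‖∑ x ∈ B, χ (∑ i, x i * (0 : Fin d → F) i)‖)^2
        = ((A.card:ℝ) * B.card)^2 := by
      rw [hA0, hB0, Complex.norm_natCast, Complex.norm_natCast]; ring
    have trest : ∑ m ∈ Finset.univ.erase (0 : Fin d → F),
          (‖∑ x ∈ A, χ (∑ i, x i * m i)‖)^2
            * (‖∑ x ∈ B, χ (∑ i, x i * m i)‖)^2
        ≤ C^2 * B.card * ((Fintype.card F : ℝ)^d * A.card) := by
      calc ∑ m ∈ Finset.univ.erase (0 : Fin d → F),
            (‖∑ x ∈ A, χ (∑ i, x i * m i)‖)^2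
              * (‖∑ x ∈ B, χ (∑ i, x i * m i)‖)^2
          ≤ ∑ m ∈ Finset.univ.erase (0 : Fin d → F),
            (‖∑ x ∈ A, χ (∑ i, x i * m i)‖)^2 * (C^2 * B.card) := by
            refine Finset.sum_le_sum fun m hm => ?_
            exact mul_le_mul_of_nonneg_left (hptB m (Finset.ne_of_mem_erase hm)) (sq_nonneg _)
        _ = (∑ m ∈ Finset.univ.erase (0 : Fin d → F),
              (‖∑ x ∈ A, χ (∑ i, x i * m i)‖)^2) * (C^2 * B.card) := by
            rw [Finset.sum_mul]
        _ ≤ (∑ m : Fin d → F,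
              (‖∑ x ∈ A, χ (∑ i, x i * m i)‖)^2) * (C^2 * B.card) := by
            refine mul_le_mul_of_nonneg_right ?_ (by positivity)
            exact Finset.sum_le_sum_of_subset_of_nonneg (Finset.erase_subset _ _)
              (fun _ _ _ => sq_nonneg _)
        _ = ((Fintype.card F : ℝ)^d * A.card) * (C^2 * B.card) := by
            rw [parseval χ hχ A]
        _ = C^2 * B.card * ((Fintype.card F : ℝ)^d * A.card) := by ring
    linarith [t0, trest]
  -- energy identity
  have hEn := energy χ hχ A B
  have hEn2 : (∑ z : Fin d → F,
        ((((A ×ˢ B).filter (fun p => p.1 - p.2 = z)).card : ℝ))^2) * (Fintype.card F : ℝ)^d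
      ≤ ((A.card:ℝ) * B.card)^2
          + C^2 * B.card * ((Fintype.card F : ℝ)^d * A.card) := by
    rw [hEn]; exact hRHS
  -- final arithmetic
  have hC2 : (1:ℝ) ≤ C^2 := by nlinarith [hC]
  have habpos : (0:ℝ) < (A.card:ℝ) * B.card := mul_pos ha0 hb0
  have hcard_nonneg : (0:ℝ) ≤ ((A-B).card : ℝ) := Nat.cast_nonneg _
  have key : (Fintype.card F : ℝ)^d * (((A.card:ℝ) * B.card)^2)
      ≤ (((A-B).card : ℝ) * (2*C^2)) * (((A.card:ℝ) * B.card)^2) := by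
    have c1 : (((A.card:ℝ) * B.card)^2) * (Fintype.card F : ℝ)^d
        ≤ ((A-B).card : ℝ)
          * (((A.card:ℝ) * B.card)^2
              + C^2 * B.card * ((Fintype.card F : ℝ)^d * A.card)) := by
      calc (((A.card:ℝ) * B.card)^2) * (Fintype.card F : ℝ)^d
          ≤ (((A-B).card : ℝ)
              * ∑ z ∈ A - B, ((((A ×ˢ B).filter (fun p => p.1 - p.2 = z)).card : ℝ))^2)
              * (Fintype.card F : ℝ)^d :=
            mul_le_mul_of_nonneg_right hCS hN0.le
        _ ≤ (((A-B).card : ℝ)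
              * ∑ z : Fin d → F,
                  ((((A ×ˢ B).filter (fun p => p.1 - p.2 = z)).card : ℝ))^2)
              * (Fintype.card F : ℝ)^d := by
            refine mul_le_mul_of_nonneg_right
              (mul_le_mul_of_nonneg_left hmono hcard_nonneg) hN0.le
        _ = ((A-B).card : ℝ)
              * ((∑ z : Fin d → F,
                  ((((A ×ˢ B).filter (fun p => p.1 - p.2 = z)).card : ℝ))^2)
                  * (Fintype.card F : ℝ)^d) := by ring
        _ ≤ ((A-B).card : ℝ)
              * (((A.card:ℝ) * B.card)^2
                  + C^2 * B.card * ((Fintype.card F : ℝ)^d * A.card)) :=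
            mul_le_mul_of_nonneg_left hEn2 hcard_nonneg
    have c2 : ((A.card:ℝ) * B.card)^2
        + C^2 * B.card * ((Fintype.card F : ℝ)^d * A.card)
        ≤ 2*C^2 * (((A.card:ℝ) * B.card)^2) := by
      have f1 : C^2 * (B.card:ℝ) * ((Fintype.card F : ℝ)^d * A.card)
          ≤ C^2 * (((A.card:ℝ) * B.card)^2) := by
        have h' : (Fintype.card F : ℝ)^d * ((A.card:ℝ) * B.card)
            ≤ ((A.card:ℝ) * B.card) * ((A.card:ℝ) * B.card) :=
          mul_le_mul_of_nonneg_right hAB habpos.le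
        nlinarith [sq_nonneg C]
      have f2 : (((A.card:ℝ) * B.card)^2) ≤ C^2 * (((A.card:ℝ) * B.card)^2) :=
        le_mul_of_one_le_left (sq_nonneg _) hC2
      linarith
    calc (Fintype.card F : ℝ)^d * (((A.card:ℝ) * B.card)^2)
        = (((A.card:ℝ) * B.card)^2) * (Fintype.card F : ℝ)^d := by ring
      _ ≤ ((A-B).card : ℝ)
            * (((A.card:ℝ) * B.card)^2
                + C^2 * B.card * ((Fintype.card F : ℝ)^d * A.card)) := c1
      _ ≤ ((A-B).card : ℝ) * (2*C^2 * (((A.card:ℝ) * B.card)^2)) :=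
          mul_le_mul_of_nonneg_left c2 hcard_nonneg
      _ = (((A-B).card : ℝ) * (2*C^2)) * (((A.card:ℝ) * B.card)^2) := by ring
  have hfin : (Fintype.card F : ℝ)^d ≤ ((A-B).card : ℝ) * (2*C^2) :=
    le_of_mul_le_mul_right key (by positivity)
  have h2C : (0:ℝ) < 2*C^2 := by positivity
  rw [div_mul_eq_mul_div, one_mul, div_le_iff₀ h2C]
  exact hfin
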